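/- In the quadratic-loss implicit SGD model with ‖x‖² ≤ M almost surely and V = E[xxᵀ] ⪰ μI for some μ > 0, for EVERY learning rate γ > 0 and every n ≥ 0, E[‖θ_n − θ*‖²] ≤ (1 − γμ/(1 + γM))ⁿ E[‖θ_0 − θ*‖²] + γ(1 + γM)σ²E[‖x‖²]/μ, where the contraction factor 1 − γμ/(1+γM) always lies in [0, 1); i.e., constant-rate implicit SGD converges exponentially fast to an O(γ) neighborhood of θ* without any upper restriction on γ. -/

import Mathlib

open MeasureTheory ProbabilityTheory Matrix

section isgdAux

variable {p : ℕ}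

lemma isgd_meas_dot {α : Type*} [MeasurableSpace α] {f g : α → Fin p → ℝ}
    (hf : Measurable f) (hg : Measurable g) : Measurable fun ω => f ω ⬝ᵥ g ω := by
  simp only [dotProduct]
  exact Finset.measurable_sum _ fun i _ =>
    ((measurable_pi_apply i).comp hf).mul ((measurable_pi_apply i).comp hg)

lemma isgd_sum_expand (D a : Fin p → ℝ) (t : ℝ) :
    ∑ i, (D i + t * a i) ^ 2 = (∑ i, D i ^ 2) + 2 * t * (a ⬝ᵥ D) + t ^ 2 * (a ⬝ᵥ a) := by
  have h : ∀ i, (D i + t * a i) ^ 2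
      = D i ^ 2 + (2 * t) * (a i * D i) + (t ^ 2) * (a i * a i) := fun i => by ring
  simp only [h, Finset.sum_add_distrib, ← Finset.mul_sum, dotProduct]

/-- one step of the implicit SGD recursion, as a map of (previous iterate, datum). -/
noncomputable def isgdStepMap (p : ℕ) (γ : ℝ) (θstar : Fin p → ℝ)
    (q : (Fin p → ℝ) × ((Fin p → ℝ) × ℝ)) : Fin p → ℝ :=
  q.1 + (γ / (1 + γ * (q.2.1 ⬝ᵥ q.2.1))) • ((((q.2.1 ⬝ᵥ θstar + q.2.2) - q.2.1 ⬝ᵥ q.1)) • q.2.1)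

/-- squared distance to `θstar` after one implicit SGD step. -/
noncomputable def isgdG (p : ℕ) (γ : ℝ) (θstar : Fin p → ℝ)
    (q : (Fin p → ℝ) × ((Fin p → ℝ) × ℝ)) : ℝ :=
  ∑ i, (isgdStepMap p γ θstar q i - θstar i) ^ 2

lemma isgdStepMap_measurable (p : ℕ) (γ : ℝ) (θstar : Fin p → ℝ) :
    Measurable (isgdStepMap p γ θstar) := by
  apply measurable_pi_lambda
  intro i
  have h21 : Measurable fun q : (Fin p → ℝ) × ((Fin p → ℝ) × ℝ) => q.2.1 :=
    measurable_fst.comp measurable_snd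
  have h22 : Measurable fun q : (Fin p → ℝ) × ((Fin p → ℝ) × ℝ) => q.2.2 :=
    measurable_snd.comp measurable_snd
  have hdot : Measurable fun q : (Fin p → ℝ) × ((Fin p → ℝ) × ℝ) => q.2.1 ⬝ᵥ q.2.1 :=
    isgd_meas_dot h21 h21
  have hdotθ : Measurable fun q : (Fin p → ℝ) × ((Fin p → ℝ) × ℝ) => q.2.1 ⬝ᵥ θstar :=
    isgd_meas_dot h21 measurable_const
  have hdot1 : Measurable fun q : (Fin p → ℝ) × ((Fin p → ℝ) × ℝ) => q.2.1 ⬝ᵥ q.1 :=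
    isgd_meas_dot h21 measurable_fst
  simp only [isgdStepMap, Pi.add_apply, Pi.smul_apply, smul_eq_mul]
  exact ((measurable_pi_apply i).comp measurable_fst).add
    ((measurable_const.div ((hdot.const_mul γ).const_add 1)).mul
      (((hdotθ.add h22).sub hdot1).mul ((measurable_pi_apply i).comp h21)))

lemma isgdG_measurable (p : ℕ) (γ : ℝ) (θstar : Fin p → ℝ) :
    Measurable (isgdG p γ θstar) :=
  Finset.measurable_sum _ fun i _ =>
    (((measurable_pi_apply i).comp (isgdStepMap_measurable p γ θstar)).sub
      measurable_const).pow_const 2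

lemma isgdG_nonneg (p : ℕ) (γ : ℝ) (θstar : Fin p → ℝ) (q) :
    0 ≤ isgdG p γ θstar q :=
  Finset.sum_nonneg fun i _ => sq_nonneg _

lemma isgdG_eq (p : ℕ) (γ : ℝ) (θstar δ a : Fin p → ℝ) (e : ℝ) :
    isgdG p γ θstar (δ, (a, e))
      = (∑ i, (δ i - θstar i) ^ 2)
        + 2 * (γ / (1 + γ * (a ⬝ᵥ a)) * (e - a ⬝ᵥ (δ - θstar))) * (a ⬝ᵥ (δ - θstar))
        + (γ / (1 + γ * (a ⬝ᵥ a)) * (e - a ⬝ᵥ (δ - θstar))) ^ 2 * (a ⬝ᵥ a) := by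
  have h1 : ∀ i, isgdStepMap p γ θstar (δ, (a, e)) i - θstar i
      = (δ i - θstar i)
        + (γ / (1 + γ * (a ⬝ᵥ a)) * (e - a ⬝ᵥ (δ - θstar))) * a i := by
    intro i
    simp only [isgdStepMap, Pi.add_apply, Pi.smul_apply, smul_eq_mul, dotProduct_sub]
    ring
  calc isgdG p γ θstar (δ, (a, e))
      = ∑ i, ((δ i - θstar i)
          + (γ / (1 + γ * (a ⬝ᵥ a)) * (e - a ⬝ᵥ (δ - θstar))) * a i) ^ 2 := by
        unfold isgdG
        exact Finset.sum_congr rfl fun i _ => by rw [h1 i]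
    _ = _ := isgd_sum_expand (δ - θstar) a _

end isgdAux

set_option maxHeartbeats 4000000 in
/-- Quadratic-loss implicit SGD
`θ_n = θ_{n-1} + (γ/(1+γ‖x_n‖²))(y_n - x_nᵀθ_{n-1})x_n` with i.i.d. data
`y_n = x_nᵀθ* + ε_n`, `x ~ νx`, `ε ~ νε` independent of `x`, `E[ε] = 0`,
`E[ε²] = σ²`, `‖x‖² ≤ M` almost surely and `V = E[xxᵀ] ⪰ μI` with `μ > 0`.
Then for EVERY learning rate `γ > 0` and every `n ≥ 0`,
`E[‖θ_n - θ*‖²] ≤ (1 - γμ/(1+γM))ⁿ E[‖θ₀ - θ*‖²] + γ(1+γM)σ²E[‖x‖²]/μ`,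
where the contraction factor `1 - γμ/(1+γM)` always lies in `[0, 1)`. -/
theorem isgd_quadratic_constant_rate_mse_bound
    (p : ℕ) (hp : 0 < p)
    (νx : Measure (Fin p → ℝ)) (νε : Measure ℝ)
    [IsProbabilityMeasure νx] [IsProbabilityMeasure νε]
    (θstar : Fin p → ℝ) (γ σ2 M μ : ℝ)
    (hμ : 0 < μ) (hM : 0 < M) (hγ : 0 < γ)
    (hmean : ∫ e, e ∂νε = 0) (hvar : ∫ e, e ^ 2 ∂νε = σ2)
    (hεint : Integrable (fun e : ℝ => e ^ 2) νε)
    (hbdd : ∀ᵐ a ∂νx, a ⬝ᵥ a ≤ M)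
    (V : Matrix (Fin p) (Fin p) ℝ)
    (hV : ∀ i j, V i j = ∫ a, a i * a j ∂νx)
    (hVμ : ∀ v : Fin p → ℝ, μ * (v ⬝ᵥ v) ≤ v ⬝ᵥ (V *ᵥ v))
    -- the probability space carrying the i.i.d. data stream and the iterates
    {Ω : Type*} [MeasurableSpace Ω] (P : Measure Ω) [IsProbabilityMeasure P]
    (x : ℕ → Ω → Fin p → ℝ) (ε : ℕ → Ω → ℝ)
    (hmeas : ∀ n, Measurable (fun ω => (x n ω, ε n ω)))
    (hiid : iIndepFun (fun n ω => (x n ω, ε n ω)) P)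
    (hdist : ∀ n, Measure.map (fun ω => (x n ω, ε n ω)) P = νx.prod νε)
    (θ : ℕ → Ω → Fin p → ℝ)
    (hθmeas : ∀ n, Measurable (θ n))
    (hθ0L2 : Integrable (fun ω => ∑ i, (θ 0 ω i - θstar i) ^ 2) P)
    (hθ0indep : IndepFun (θ 0) (fun ω n => (x n ω, ε n ω)) P)
    -- implicit SGD recursion (closed form) with y_n = x_nᵀθ* + ε_n
    (hrec : ∀ n : ℕ, 1 ≤ n → ∀ ω,
      θ n ω = θ (n - 1) ω
        + (γ / (1 + γ * (x n ω ⬝ᵥ x n ω)))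
            • ((((x n ω ⬝ᵥ θstar + ε n ω) - x n ω ⬝ᵥ θ (n - 1) ω)) • x n ω)) :
    (0 ≤ 1 - γ * μ / (1 + γ * M) ∧ 1 - γ * μ / (1 + γ * M) < 1) ∧
    ∀ n : ℕ,
      (∫ ω, ∑ i, (θ n ω i - θstar i) ^ 2 ∂P)
        ≤ (1 - γ * μ / (1 + γ * M)) ^ n
              * (∫ ω, ∑ i, (θ 0 ω i - θstar i) ^ 2 ∂P)
          + γ * (1 + γ * M) * σ2 * (∫ a, a ⬝ᵥ a ∂νx) / μ := by
  -- notation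
  have hden : (0:ℝ) < 1 + γ * M := by nlinarith
  have hK0 : ∀ a : Fin p → ℝ, 0 ≤ a ⬝ᵥ a := fun a =>
    Finset.sum_nonneg fun i _ => mul_self_nonneg _
  have hσ2 : 0 ≤ σ2 := hvar ▸ integral_nonneg fun e => sq_nonneg e
  have hd : ∀ a : Fin p → ℝ, (0:ℝ) < 1 + γ * (a ⬝ᵥ a) := fun a => by
    nlinarith [hK0 a]
  have hc0 : ∀ a : Fin p → ℝ, 0 ≤ γ / (1 + γ * (a ⬝ᵥ a)) := fun a =>
    div_nonneg hγ.le (hd a).le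
  have hc_le : ∀ a : Fin p → ℝ, γ / (1 + γ * (a ⬝ᵥ a)) ≤ γ := fun a =>
    div_le_self hγ.le (by nlinarith [hK0 a])
  have hcK1 : ∀ a : Fin p → ℝ, γ / (1 + γ * (a ⬝ᵥ a)) * (a ⬝ᵥ a) ≤ 1 := by
    intro a
    rw [div_mul_eq_mul_div, div_le_one (hd a)]
    nlinarith [hK0 a]
  have hcγM : ∀ a : Fin p → ℝ, a ⬝ᵥ a ≤ M → γ / (1 + γ * M) ≤ γ / (1 + γ * (a ⬝ᵥ a)) := by
    intro a hKM
    rw [div_le_div_iff₀ hden (hd a)]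
    nlinarith [mul_le_mul_of_nonneg_left hKM (mul_nonneg hγ.le hγ.le)]
  have hc2K : ∀ a : Fin p → ℝ, (γ / (1 + γ * (a ⬝ᵥ a))) ^ 2 * (a ⬝ᵥ a) ≤ γ := by
    intro a
    have h := mul_le_mul (hc_le a) (hcK1 a)
      (mul_nonneg (hc0 a) (hK0 a)) hγ.le
    nlinarith [h]
  -- integrability of the identity w.r.t. νε
  have hεid : Integrable (fun e : ℝ => e) νε := by
    have hb : Integrable (fun e : ℝ => 1 + e ^ 2) νε := by
      simpa using (integrable_const (1:ℝ)).add hεint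
    refine hb.mono' measurable_id.aestronglyMeasurable (ae_of_all _ fun e => ?_)
    rw [Real.norm_eq_abs]
    nlinarith [sq_abs e, sq_nonneg (|e| - 1), abs_nonneg e]
  -- Cauchy-Schwarz
  have hCS : ∀ (D a : Fin p → ℝ), (a ⬝ᵥ D) ^ 2 ≤ (a ⬝ᵥ a) * (∑ i, D i ^ 2) := by
    intro D a
    calc (a ⬝ᵥ D) ^ 2 = (∑ i, a i * D i) ^ 2 := rfl
      _ ≤ (∑ i, a i ^ 2) * (∑ i, D i ^ 2) :=
          Finset.sum_mul_sq_le_sq_mul_sq Finset.univ a D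
      _ = (a ⬝ᵥ a) * (∑ i, D i ^ 2) := by simp [dotProduct, sq]
  -- integrability of products and quadratic forms w.r.t. νx
  have hij : ∀ i j : Fin p, Integrable (fun a : Fin p → ℝ => a i * a j) νx := by
    intro i j
    refine (integrable_const M).mono'
      (((measurable_pi_apply i).mul (measurable_pi_apply j)).aestronglyMeasurable)
      (hbdd.mono fun a hKM => ?_)
    have hii : a i * a i ≤ a ⬝ᵥ a :=
      Finset.single_le_sum (f := fun k => a k * a k)
        (fun k _ => mul_self_nonneg _) (Finset.mem_univ i)
    have hjj : a j * a j ≤ a ⬝ᵥ a :=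
      Finset.single_le_sum (f := fun k => a k * a k)
        (fun k _ => mul_self_nonneg _) (Finset.mem_univ j)
    rw [Real.norm_eq_abs]
    nlinarith [abs_nonneg (a i * a j), sq_abs (a i * a j),
      mul_self_nonneg (a i), mul_self_nonneg (a j), hM]
  have hKmeas : Measurable (fun a : Fin p → ℝ => a ⬝ᵥ a) :=
    isgd_meas_dot measurable_id measurable_id
  have hKint : Integrable (fun a : Fin p → ℝ => a ⬝ᵥ a) νx := by
    refine (integrable_const M).mono'
      (isgd_meas_dot measurable_id measurable_id).aestronglyMeasurable
      (hbdd.mono fun a hKM => ?_)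
    rw [Real.norm_eq_abs, abs_of_nonneg (hK0 a)]
    exact hKM
  have hs2int : ∀ D : Fin p → ℝ, Integrable (fun a : Fin p → ℝ => (a ⬝ᵥ D) ^ 2) νx := by
    intro D
    refine (integrable_const (M * ∑ i, D i ^ 2)).mono'
      (((isgd_meas_dot measurable_id measurable_const).pow_const 2).aestronglyMeasurable)
      (hbdd.mono fun a hKM => ?_)
    rw [Real.norm_eq_abs, abs_of_nonneg (sq_nonneg _)]
    have h1 := hCS D a
    have h2 : 0 ≤ ∑ i, D i ^ 2 := Finset.sum_nonneg fun i _ => sq_nonneg _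
    nlinarith
  -- second moment identity and lower bound
  have hVint : ∀ D : Fin p → ℝ, ∫ a, (a ⬝ᵥ D) ^ 2 ∂νx = D ⬝ᵥ (V *ᵥ D) := by
    intro D
    have h1 : ∀ a : Fin p → ℝ, (a ⬝ᵥ D) ^ 2 = ∑ i, ∑ j, (D i * D j) * (a i * a j) := by
      intro a
      rw [sq]
      show (∑ i, a i * D i) * (∑ j, a j * D j) = _
      rw [Finset.sum_mul_sum]
      exact Finset.sum_congr rfl fun i _ => Finset.sum_congr rfl fun j _ => by ring
    simp only [h1]
    rw [integral_finset_sum _ (fun i _ =>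
      integrable_finset_sum _ (fun j _ => (hij i j).const_mul _))]
    have h2 : ∀ i : Fin p, ∫ a, ∑ j, (D i * D j) * (a i * a j) ∂νx
        = ∑ j, (D i * D j) * V i j := by
      intro i
      rw [integral_finset_sum _ (fun j _ => (hij i j).const_mul _)]
      exact Finset.sum_congr rfl fun j _ => by rw [integral_const_mul, hV i j]
    rw [Finset.sum_congr rfl fun i _ => h2 i]
    simp only [dotProduct, mulVec, Finset.mul_sum]
    exact Finset.sum_congr rfl fun i _ => Finset.sum_congr rfl fun j _ => by ring
  have hVlow : ∀ D : Fin p → ℝ, μ * (∑ i, D i ^ 2) ≤ ∫ a, (a ⬝ᵥ D) ^ 2 ∂νx := by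
    intro D
    rw [hVint D]
    have hDD : D ⬝ᵥ D = ∑ i, D i ^ 2 := by simp [dotProduct, sq]
    have := hVμ D
    rw [hDD] at this
    exact this
  -- μ ≤ M
  have hμM : μ ≤ M := by
    set D0 : Fin p → ℝ := fun i => if i = ⟨0, hp⟩ then 1 else 0 with hD0def
    have hD0 : ∑ i, D0 i ^ 2 = 1 := by
      have h : ∀ i, D0 i ^ 2 = if i = ⟨0, hp⟩ then 1 else 0 := by
        intro i; by_cases h : i = ⟨0, hp⟩ <;> simp [hD0def, h]
      simp [h]
    have h1 := hVlow D0
    rw [hD0, mul_one] at h1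
    have h2 : ∫ a, (a ⬝ᵥ D0) ^ 2 ∂νx ≤ ∫ _a, M ∂νx := by
      refine integral_mono_ae (hs2int D0) (integrable_const M)
        (hbdd.mono fun a hKM => ?_)
      show (a ⬝ᵥ D0) ^ 2 ≤ M
      have := hCS D0 a
      rw [hD0, mul_one] at this
      linarith
    rw [integral_const] at h2
    simp [measure_univ] at h2
    linarith
  have hfrac_pos : 0 < γ * μ / (1 + γ * M) := by positivity
  have hfrac_le : γ * μ / (1 + γ * M) ≤ 1 := by
    rw [div_le_one hden]; nlinarith
  have hρ0 : 0 ≤ 1 - γ * μ / (1 + γ * M) := by linarith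
  have hρ1 : 1 - γ * μ / (1 + γ * M) < 1 := by linarith
  refine ⟨⟨hρ0, hρ1⟩, ?_⟩
  -- integral of a quadratic polynomial in the noise
  have hquad_int : ∀ A B C : ℝ,
      Integrable (fun e : ℝ => A + B * e + C * e ^ 2) νε ∧
      ∫ e, (A + B * e + C * e ^ 2) ∂νε = A + C * σ2 := by
    intro A B C
    have h1 : Integrable (fun e : ℝ => B * e) νε := hεid.const_mul B
    have h2 : Integrable (fun e : ℝ => C * e ^ 2) νε := hεint.const_mul C
    have h0 : Integrable (fun e : ℝ => A + B * e) νε := by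
      simpa using (integrable_const A).add h1
    constructor
    · exact h0.add h2
    · rw [integral_add h0 h2, integral_add (integrable_const A) h1,
        integral_const_mul, integral_const_mul, hmean, hvar]
      simp [measure_univ]
  -- inner integral over the noise
  have hInner : ∀ δ a : Fin p → ℝ,
      ∫ e, isgdG p γ θstar (δ, (a, e)) ∂νε
        = ((∑ i, (δ i - θstar i) ^ 2)
            - 2 * (γ / (1 + γ * (a ⬝ᵥ a))) * (a ⬝ᵥ (δ - θstar)) ^ 2
            + (γ / (1 + γ * (a ⬝ᵥ a))) ^ 2 * (a ⬝ᵥ a) * (a ⬝ᵥ (δ - θstar)) ^ 2)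
          + ((γ / (1 + γ * (a ⬝ᵥ a))) ^ 2 * (a ⬝ᵥ a)) * σ2 := by
    intro δ a
    have hfe : (fun e => isgdG p γ θstar (δ, (a, e)))
        = fun e => ((∑ i, (δ i - θstar i) ^ 2)
            - 2 * (γ / (1 + γ * (a ⬝ᵥ a))) * (a ⬝ᵥ (δ - θstar)) ^ 2
            + (γ / (1 + γ * (a ⬝ᵥ a))) ^ 2 * (a ⬝ᵥ a) * (a ⬝ᵥ (δ - θstar)) ^ 2)
          + (2 * (γ / (1 + γ * (a ⬝ᵥ a))) * (a ⬝ᵥ (δ - θstar))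
              - 2 * (γ / (1 + γ * (a ⬝ᵥ a))) ^ 2 * (a ⬝ᵥ a) * (a ⬝ᵥ (δ - θstar))) * e
          + ((γ / (1 + γ * (a ⬝ᵥ a))) ^ 2 * (a ⬝ᵥ a)) * e ^ 2 :=
      funext fun e => by rw [isgdG_eq]; ring
    rw [hfe]
    exact (hquad_int _ _ _).2
  -- pointwise bound on G
  have hGb : ∀ δ a : Fin p → ℝ, ∀ e : ℝ, a ⬝ᵥ a ≤ M →
      ‖isgdG p γ θstar (δ, (a, e))‖
        ≤ (2 + 4 * γ * M) * (∑ i, (δ i - θstar i) ^ 2) + 4 * γ * e ^ 2 := by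
    intro δ a e hKM
    rw [Real.norm_eq_abs, abs_of_nonneg (isgdG_nonneg p γ θstar _), isgdG_eq]
    set t : ℝ := γ / (1 + γ * (a ⬝ᵥ a)) * (e - a ⬝ᵥ (δ - θstar)) with ht
    set S : ℝ := a ⬝ᵥ (δ - θstar) with hS
    set N : ℝ := ∑ i, (δ i - θstar i) ^ 2 with hN
    have hN0 : 0 ≤ N := Finset.sum_nonneg fun i _ => sq_nonneg _
    have hS2 : S ^ 2 ≤ (a ⬝ᵥ a) * N := by
      have := hCS (δ - θstar) a
      simpa [hS, hN, Pi.sub_apply] using this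
    have h2tS : 2 * t * S ≤ N + t ^ 2 * (a ⬝ᵥ a) := by
      rcases eq_or_lt_of_le (hK0 a) with hK | hK
      · have : S ^ 2 ≤ 0 := by rw [← hK] at hS2; linarith
        have hSz : S = 0 := by nlinarith [sq_nonneg S]
        rw [hSz, ← hK]; nlinarith
      · nlinarith [sq_nonneg (t * (a ⬝ᵥ a) - S), hS2, hK]
    have h4 : t ^ 2 * (a ⬝ᵥ a) ≤ γ * (2 * e ^ 2 + 2 * M * N) := by
      have heq : t ^ 2 * (a ⬝ᵥ a)
          = ((γ / (1 + γ * (a ⬝ᵥ a))) ^ 2 * (a ⬝ᵥ a)) * (e - S) ^ 2 := by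
        rw [ht]; ring
      rw [heq]
      have h5 : (e - S) ^ 2 ≤ 2 * e ^ 2 + 2 * M * N := by
        nlinarith [sq_nonneg (e + S), hS2, hKM, hN0]
      calc ((γ / (1 + γ * (a ⬝ᵥ a))) ^ 2 * (a ⬝ᵥ a)) * (e - S) ^ 2
          ≤ γ * (e - S) ^ 2 := mul_le_mul_of_nonneg_right (hc2K a) (sq_nonneg _)
        _ ≤ γ * (2 * e ^ 2 + 2 * M * N) := mul_le_mul_of_nonneg_left h5 hγ.le
    have hgoal : N + 2 * t * S + t ^ 2 * (a ⬝ᵥ a)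
        ≤ (2 + 4 * γ * M) * N + 4 * γ * e ^ 2 := by linarith
    exact hgoal
  -- a.e. bound on the product measure
  have hbdd_prod : ∀ᵐ z : (Fin p → ℝ) × ℝ ∂(νx.prod νε), z.1 ⬝ᵥ z.1 ≤ M := by
    have hN : νx {a : Fin p → ℝ | ¬ a ⬝ᵥ a ≤ M} = 0 := by rwa [ae_iff] at hbdd
    rw [ae_iff]
    refine measure_mono_null
      (t := {a : Fin p → ℝ | ¬ a ⬝ᵥ a ≤ M} ×ˢ (Set.univ : Set ℝ))
      (fun z hz => ⟨hz, trivial⟩) ?_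
    rw [Measure.prod_prod, hN, zero_mul]
  -- integrability of G over the product measure, for fixed δ
  have hsnd2int : Integrable (fun z : (Fin p → ℝ) × ℝ => z.2 ^ 2) (νx.prod νε) := by
    have hmapsnd : Measure.map Prod.snd (νx.prod νε) = νε := by
      rw [Measure.map_snd_prod]; simp
    have h := (integrable_map_measure
      ((measurable_id.pow_const 2).aestronglyMeasurable (μ := Measure.map Prod.snd (νx.prod νε)))
      measurable_snd.aemeasurable).mp (by rwa [hmapsnd])
    exact h
  have hGint_prod : ∀ δ : Fin p → ℝ,
      Integrable (fun z : (Fin p → ℝ) × ℝ => isgdG p γ θstar (δ, z)) (νx.prod νε) := by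
    intro δ
    have hb : Integrable (fun z : (Fin p → ℝ) × ℝ =>
        (2 + 4 * γ * M) * (∑ i, (δ i - θstar i) ^ 2) + 4 * γ * z.2 ^ 2) (νx.prod νε) := by
      exact (integrable_const ((2 + 4 * γ * M) * (∑ i, (δ i - θstar i) ^ 2))).add
        (hsnd2int.const_mul (4 * γ))
    refine hb.mono' (((isgdG_measurable p γ θstar).comp
      (measurable_const.prodMk measurable_id)).aestronglyMeasurable)
      (hbdd_prod.mono fun z hz => ?_)
    simpa using hGb δ z.1 z.2 hz
  -- one-step expected bound
  have lemA : ∀ δ : Fin p → ℝ,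
      ∫ z, isgdG p γ θstar (δ, z) ∂(νx.prod νε)
        ≤ (1 - γ * μ / (1 + γ * M)) * (∑ i, (δ i - θstar i) ^ 2)
          + γ ^ 2 * σ2 * (∫ a, a ⬝ᵥ a ∂νx) := by
    intro δ
    have hN0 : 0 ≤ ∑ i, (δ i - θstar i) ^ 2 := Finset.sum_nonneg fun i _ => sq_nonneg _
    have ha1 : Integrable (fun a : Fin p → ℝ =>
        (∑ i, (δ i - θstar i) ^ 2) + (γ ^ 2 * σ2) * (a ⬝ᵥ a)) νx := by
      simpa using (integrable_const (∑ i, (δ i - θstar i) ^ 2)).add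
        (hKint.const_mul (γ ^ 2 * σ2))
    have ha2 : Integrable (fun a : Fin p → ℝ =>
        (γ / (1 + γ * M)) * (a ⬝ᵥ (δ - θstar)) ^ 2) νx :=
      (hs2int (δ - θstar)).const_mul _
    rw [MeasureTheory.integral_prod _ (hGint_prod δ)]
    have hmono : ∫ a, (∫ e, isgdG p γ θstar (δ, (a, e)) ∂νε) ∂νx
        ≤ ∫ a, ((∑ i, (δ i - θstar i) ^ 2) + (γ ^ 2 * σ2) * (a ⬝ᵥ a)
            - (γ / (1 + γ * M)) * (a ⬝ᵥ (δ - θstar)) ^ 2) ∂νx := by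
      refine integral_mono_ae ((hGint_prod δ).integral_prod_left)
        (ha1.sub ha2) ?_
      filter_upwards [hbdd] with a hKM
      show (∫ e, isgdG p γ θstar (δ, (a, e)) ∂νε) ≤ _
      rw [hInner δ a]
      have e0 : (γ / (1 + γ * (a ⬝ᵥ a))) ^ 2 ≤ γ ^ 2 := by nlinarith [hc0 a, hc_le a]
      have e1 : (γ / (1 + γ * (a ⬝ᵥ a))) ^ 2 * (a ⬝ᵥ a) * σ2
          ≤ γ ^ 2 * σ2 * (a ⬝ᵥ a) := by
        nlinarith [mul_le_mul_of_nonneg_right e0 (mul_nonneg (hK0 a) hσ2)]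
      have h7 := mul_le_mul_of_nonneg_left (hcK1 a) (hc0 a)
      have e2' : γ / (1 + γ * M) ≤ 2 * (γ / (1 + γ * (a ⬝ᵥ a)))
          - (γ / (1 + γ * (a ⬝ᵥ a))) ^ 2 * (a ⬝ᵥ a) := by
        nlinarith [hcγM a hKM, h7]
      have e2 := mul_le_mul_of_nonneg_right e2' (sq_nonneg (a ⬝ᵥ (δ - θstar)))
      nlinarith [e1, e2]
    have heq2 : ∫ a, ((∑ i, (δ i - θstar i) ^ 2) + (γ ^ 2 * σ2) * (a ⬝ᵥ a)
            - (γ / (1 + γ * M)) * (a ⬝ᵥ (δ - θstar)) ^ 2) ∂νx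
        = (∑ i, (δ i - θstar i) ^ 2) + γ ^ 2 * σ2 * (∫ a, a ⬝ᵥ a ∂νx)
          - (γ / (1 + γ * M)) * ∫ a, (a ⬝ᵥ (δ - θstar)) ^ 2 ∂νx := by
      rw [integral_sub ha1 ha2,
        integral_add (integrable_const _) (hKint.const_mul _),
        integral_const_mul, integral_const_mul, integral_const]
      simp [measure_univ]
    have hVD : μ * (∑ i, (δ i - θstar i) ^ 2) ≤ ∫ a, (a ⬝ᵥ (δ - θstar)) ^ 2 ∂νx := by
      simpa [Pi.sub_apply] using hVlow (δ - θstar)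
    have h8 : (γ / (1 + γ * M)) * (μ * (∑ i, (δ i - θstar i) ^ 2))
        ≤ (γ / (1 + γ * M)) * ∫ a, (a ⬝ᵥ (δ - θstar)) ^ 2 ∂νx :=
      mul_le_mul_of_nonneg_left hVD (by positivity)
    have hring : (1 - γ * μ / (1 + γ * M)) * (∑ i, (δ i - θstar i) ^ 2)
          + γ ^ 2 * σ2 * (∫ a, a ⬝ᵥ a ∂νx)
        = (∑ i, (δ i - θstar i) ^ 2) + γ ^ 2 * σ2 * (∫ a, a ⬝ᵥ a ∂νx)
          - (γ / (1 + γ * M)) * (μ * (∑ i, (δ i - θstar i) ^ 2)) := by ring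
    rw [hring]
    linarith [hmono, heq2.le, heq2.ge, h8]
  have hNmeas : Measurable (fun δ : Fin p → ℝ => ∑ i, (δ i - θstar i) ^ 2) :=
    Finset.measurable_sum _ fun i _ =>
      ((measurable_pi_apply i).sub measurable_const).pow_const 2
  -- θ m is a measurable function of (θ 0, data 1..m)
  have hθfun : ∀ m : ℕ, ∃ F : (Fin p → ℝ) × (Fin m → (Fin p → ℝ) × ℝ) → (Fin p → ℝ),
      Measurable F ∧ ∀ ω, θ m ω = F (θ 0 ω, fun k => (x (k + 1 : ℕ) ω, ε (k + 1 : ℕ) ω)) := by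
    intro m
    induction m with
    | zero => exact ⟨Prod.fst, measurable_fst, fun ω => rfl⟩
    | succ m ih =>
      obtain ⟨F, hFm, hFe⟩ := ih
      refine ⟨fun z => isgdStepMap p γ θstar
        (F (z.1, fun k => z.2 k.castSucc), z.2 (Fin.last m)), ?_, ?_⟩
      · exact (isgdStepMap_measurable p γ θstar).comp
          ((hFm.comp (measurable_fst.prodMk (measurable_pi_lambda _ fun k =>
            (measurable_pi_apply k.castSucc).comp measurable_snd))).prodMk
            ((measurable_pi_apply (Fin.last m)).comp measurable_snd))
      · intro ω
        have h := hrec (m + 1) (by omega) ω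
        simp only [Nat.add_sub_cancel] at h
        simp only [Fin.coe_castSucc, Fin.val_last]
        rw [← hFe ω, h]
        rfl
  -- one-step inequality for the expected squared error
  have hstep : ∀ m : ℕ,
      Integrable (fun ω => ∑ i, (θ m ω i - θstar i) ^ 2) P →
      Integrable (fun ω => ∑ i, (θ (m + 1) ω i - θstar i) ^ 2) P ∧
      ∫ ω, ∑ i, (θ (m + 1) ω i - θstar i) ^ 2 ∂P
        ≤ (1 - γ * μ / (1 + γ * M)) * ∫ ω, ∑ i, (θ m ω i - θstar i) ^ 2 ∂P
          + γ ^ 2 * σ2 * (∫ a, a ⬝ᵥ a ∂νx) := by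
    intro m IH
    obtain ⟨F, hFm, hFe⟩ := hθfun m
    set W : Ω → (Fin p → ℝ) × ℝ := fun ω => (x (m + 1) ω, ε (m + 1) ω) with hW
    set U : Ω → Fin m → (Fin p → ℝ) × ℝ :=
      fun ω k => (x (k + 1 : ℕ) ω, ε (k + 1 : ℕ) ω) with hU
    have hWmeas : Measurable W := hmeas (m + 1)
    have hUmeas : Measurable U := measurable_pi_lambda _ fun k => hmeas (k + 1)
    -- independence of U and W
    have hUW : IndepFun U W P := by
      have hdisj : Disjoint (Finset.Icc 1 m) ({m + 1} : Finset ℕ) := by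
        simp [Finset.disjoint_singleton_right, Finset.mem_Icc]
      have h := hiid.indepFun_finset (Finset.Icc 1 m) {m + 1} hdisj hmeas
      have hg1 : Measurable (fun v : ((Finset.Icc 1 m : Finset ℕ) → (Fin p → ℝ) × ℝ) =>
          (fun k : Fin m => v ⟨k + 1,
            Finset.mem_Icc.mpr ⟨Nat.succ_le_succ (Nat.zero_le _), Nat.succ_le_of_lt k.isLt⟩⟩)) :=
        measurable_pi_lambda _ fun k => measurable_pi_apply _
      have hg2 : Measurable (fun v : (({m + 1} : Finset ℕ) → (Fin p → ℝ) × ℝ) =>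
          v ⟨m + 1, Finset.mem_singleton_self _⟩) := measurable_pi_apply _
      exact h.comp hg1 hg2
    -- independence of θ0 and the data
    have hθ0UW : IndepFun (θ 0) (fun ω => (U ω, W ω)) P := by
      have hψ : Measurable (fun s : ℕ → (Fin p → ℝ) × ℝ =>
          ((fun k : Fin m => s (k + 1)), s (m + 1))) :=
        (measurable_pi_lambda _ fun k => measurable_pi_apply _).prodMk (measurable_pi_apply _)
      exact hθ0indep.comp measurable_id hψ
    have hθ0U : IndepFun (θ 0) U P := by
      have hψ : Measurable (fun s : ℕ → (Fin p → ℝ) × ℝ => (fun k : Fin m => s (k + 1))) :=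
        measurable_pi_lambda _ fun k => measurable_pi_apply _
      exact hθ0indep.comp measurable_id hψ
    haveI i1 : IsProbabilityMeasure (Measure.map (θ 0) P) :=
      Measure.isProbabilityMeasure_map (hθmeas 0).aemeasurable
    haveI i2 : IsProbabilityMeasure (Measure.map U P) :=
      Measure.isProbabilityMeasure_map hUmeas.aemeasurable
    haveI i3 : IsProbabilityMeasure (Measure.map (θ m) P) :=
      Measure.isProbabilityMeasure_map (hθmeas m).aemeasurable
    have hmapUW : Measure.map (fun ω => (U ω, W ω)) P
        = (Measure.map U P).prod (νx.prod νε) := by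
      rw [← hdist (m + 1)]
      exact (indepFun_iff_map_prod_eq_prod_map_map hUmeas.aemeasurable
        hWmeas.aemeasurable).mp hUW
    have hmapT : Measure.map (fun ω => (θ 0 ω, U ω)) P
        = (Measure.map (θ 0) P).prod (Measure.map U P) :=
      (indepFun_iff_map_prod_eq_prod_map_map (hθmeas 0).aemeasurable
        hUmeas.aemeasurable).mp hθ0U
    have hmapBig : Measure.map (fun ω => (θ 0 ω, (U ω, W ω))) P
        = (Measure.map (θ 0) P).prod ((Measure.map U P).prod (νx.prod νε)) := by
      rw [← hmapUW]
      exact (indepFun_iff_map_prod_eq_prod_map_map (hθmeas 0).aemeasurable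
        (hUmeas.prodMk hWmeas).aemeasurable).mp hθ0UW
    have hmapθm : Measure.map (θ m) P
        = Measure.map F ((Measure.map (θ 0) P).prod (Measure.map U P)) := by
      rw [← hmapT, Measure.map_map hFm ((hθmeas 0).prodMk hUmeas)]
      congr 1
      funext ω
      exact hFe ω
    have hassoc : Measure.map (MeasurableEquiv.prodAssoc
          (α := Fin p → ℝ) (β := Fin m → (Fin p → ℝ) × ℝ) (γ := (Fin p → ℝ) × ℝ)).symm
          ((Measure.map (θ 0) P).prod ((Measure.map U P).prod (νx.prod νε)))
        = ((Measure.map (θ 0) P).prod (Measure.map U P)).prod (νx.prod νε) := by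
      rw [← Measure.prodAssoc_prod,
        Measure.map_map MeasurableEquiv.prodAssoc.symm.measurable
          MeasurableEquiv.prodAssoc.measurable]
      simp
    have hlaw : Measure.map (fun ω => (θ m ω, W ω)) P
        = (Measure.map (θ m) P).prod (νx.prod νε) := by
      have houter : Measurable ((Prod.map F (id : (Fin p → ℝ) × ℝ → (Fin p → ℝ) × ℝ))
          ∘ (MeasurableEquiv.prodAssoc).symm) :=
        (hFm.prodMap measurable_id).comp MeasurableEquiv.prodAssoc.symm.measurable
      have hbigmeas : Measurable (fun ω => (θ 0 ω, (U ω, W ω))) :=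
        (hθmeas 0).prodMk (hUmeas.prodMk hWmeas)
      have hcomp' : ((Prod.map F (id : (Fin p → ℝ) × ℝ → (Fin p → ℝ) × ℝ))
            ∘ (MeasurableEquiv.prodAssoc).symm) ∘ (fun ω => (θ 0 ω, (U ω, W ω)))
          = fun ω => (θ m ω, W ω) := by
        funext ω
        show (F (θ 0 ω, U ω), W ω) = (θ m ω, W ω)
        rw [hFe ω]
      calc Measure.map (fun ω => (θ m ω, W ω)) P
          = Measure.map ((Prod.map F (id : (Fin p → ℝ) × ℝ → (Fin p → ℝ) × ℝ))
              ∘ (MeasurableEquiv.prodAssoc).symm)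
              (Measure.map (fun ω => (θ 0 ω, (U ω, W ω))) P) := by
            rw [Measure.map_map houter hbigmeas, hcomp']
        _ = Measure.map ((Prod.map F (id : (Fin p → ℝ) × ℝ → (Fin p → ℝ) × ℝ))
              ∘ (MeasurableEquiv.prodAssoc).symm)
              ((Measure.map (θ 0) P).prod ((Measure.map U P).prod (νx.prod νε))) := by
            rw [hmapBig]
        _ = Measure.map (Prod.map F (id : (Fin p → ℝ) × ℝ → (Fin p → ℝ) × ℝ))
              (Measure.map (MeasurableEquiv.prodAssoc).symm
                ((Measure.map (θ 0) P).prod ((Measure.map U P).prod (νx.prod νε)))) :=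
            (Measure.map_map (hFm.prodMap measurable_id)
              MeasurableEquiv.prodAssoc.symm.measurable).symm
        _ = Measure.map (Prod.map F (id : (Fin p → ℝ) × ℝ → (Fin p → ℝ) × ℝ))
              (((Measure.map (θ 0) P).prod (Measure.map U P)).prod (νx.prod νε)) := by
            rw [hassoc]
        _ = (Measure.map F ((Measure.map (θ 0) P).prod (Measure.map U P))).prod
              (Measure.map id (νx.prod νε)) :=
            (Measure.map_prod_map _ _ hFm measurable_id).symm
        _ = (Measure.map (θ m) P).prod (νx.prod νε) := by
            rw [Measure.map_id, ← hmapθm]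
    -- integrability over the joint law
    have hD1 : Integrable (fun δ : Fin p → ℝ => ∑ i, (δ i - θstar i) ^ 2)
        (Measure.map (θ m) P) :=
      (integrable_map_measure hNmeas.aestronglyMeasurable (hθmeas m).aemeasurable).mpr IH
    have hbddQ : ∀ᵐ q : (Fin p → ℝ) × ((Fin p → ℝ) × ℝ)
        ∂((Measure.map (θ m) P).prod (νx.prod νε)), q.2.1 ⬝ᵥ q.2.1 ≤ M := by
      have hN : νx {a : Fin p → ℝ | ¬ a ⬝ᵥ a ≤ M} = 0 := by rwa [ae_iff] at hbdd
      rw [ae_iff]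
      refine measure_mono_null
        (t := (Set.univ : Set (Fin p → ℝ)) ×ˢ
          (({a : Fin p → ℝ | ¬ a ⬝ᵥ a ≤ M}) ×ˢ (Set.univ : Set ℝ)))
        (fun q hq => ⟨trivial, hq, trivial⟩) ?_
      rw [Measure.prod_prod, Measure.prod_prod, hN, zero_mul, mul_zero]
    have hfstQ : Integrable (fun q : (Fin p → ℝ) × ((Fin p → ℝ) × ℝ) =>
        ∑ i, (q.1 i - θstar i) ^ 2) ((Measure.map (θ m) P).prod (νx.prod νε)) := by
      have hmapfst : Measure.map Prod.fst ((Measure.map (θ m) P).prod (νx.prod νε))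
          = Measure.map (θ m) P := by rw [Measure.map_fst_prod]; simp
      exact (integrable_map_measure
        (hNmeas.aestronglyMeasurable (μ := Measure.map Prod.fst
          ((Measure.map (θ m) P).prod (νx.prod νε))))
        measurable_fst.aemeasurable).mp (by rwa [hmapfst])
    have hsndQ : Integrable (fun q : (Fin p → ℝ) × ((Fin p → ℝ) × ℝ) => q.2.2 ^ 2)
        ((Measure.map (θ m) P).prod (νx.prod νε)) := by
      have hmap2 : Measure.map (fun q : (Fin p → ℝ) × ((Fin p → ℝ) × ℝ) => q.2.2)
          ((Measure.map (θ m) P).prod (νx.prod νε)) = νε := by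
        have h1 : Measure.map Prod.snd ((Measure.map (θ m) P).prod (νx.prod νε))
            = νx.prod νε := by rw [Measure.map_snd_prod]; simp
        have h2 : (fun q : (Fin p → ℝ) × ((Fin p → ℝ) × ℝ) => q.2.2)
            = (Prod.snd ∘ Prod.snd) := rfl
        rw [h2, ← Measure.map_map measurable_snd measurable_snd, h1,
          Measure.map_snd_prod]
        simp
      exact (integrable_map_measure
        ((measurable_id.pow_const 2).aestronglyMeasurable
          (μ := Measure.map (fun q : (Fin p → ℝ) × ((Fin p → ℝ) × ℝ) => q.2.2)
            ((Measure.map (θ m) P).prod (νx.prod νε))))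
        (measurable_snd.comp measurable_snd).aemeasurable).mp (by rwa [hmap2])
    have hQint : Integrable (isgdG p γ θstar) ((Measure.map (θ m) P).prod (νx.prod νε)) := by
      refine Integrable.mono'
        (g := fun q => (2 + 4 * γ * M) * (∑ i, (q.1 i - θstar i) ^ 2) + 4 * γ * q.2.2 ^ 2)
        ((hfstQ.const_mul (2 + 4 * γ * M)).add (hsndQ.const_mul (4 * γ)))
        (isgdG_measurable p γ θstar).aestronglyMeasurable
        (hbddQ.mono fun q hq => ?_)
      simpa using hGb q.1 q.2.1 q.2.2 hq
    -- transfer the recursion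
    have hrecG : (fun ω => ∑ i, (θ (m + 1) ω i - θstar i) ^ 2)
        = fun ω => isgdG p γ θstar (θ m ω, W ω) := by
      funext ω
      have h := hrec (m + 1) (by omega) ω
      simp only [Nat.add_sub_cancel] at h
      show _ = ∑ i, (isgdStepMap p γ θstar (θ m ω, W ω) i - θstar i) ^ 2
      rw [h]
      rfl
    have hpairmeas : Measurable (fun ω => (θ m ω, W ω)) := (hθmeas m).prodMk hWmeas
    have hint1 : Integrable (fun ω => ∑ i, (θ (m + 1) ω i - θstar i) ^ 2) P := by
      rw [hrecG]
      exact (integrable_map_measure (isgdG_measurable p γ θstar).aestronglyMeasurable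
        hpairmeas.aemeasurable).mp (by rw [hlaw]; exact hQint)
    refine ⟨hint1, ?_⟩
    have hcalc : ∫ ω, ∑ i, (θ (m + 1) ω i - θstar i) ^ 2 ∂P
        = ∫ q, isgdG p γ θstar q ∂((Measure.map (θ m) P).prod (νx.prod νε)) := by
      rw [hrecG, ← hlaw]
      exact (integral_map hpairmeas.aemeasurable
        (isgdG_measurable p γ θstar).aestronglyMeasurable).symm
    rw [hcalc, MeasureTheory.integral_prod _ hQint]
    have hIL : Integrable (fun δ => ∫ z, isgdG p γ θstar (δ, z) ∂(νx.prod νε))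
        (Measure.map (θ m) P) := hQint.integral_prod_left
    have hIR : Integrable (fun δ : Fin p → ℝ =>
        (1 - γ * μ / (1 + γ * M)) * (∑ i, (δ i - θstar i) ^ 2)
          + γ ^ 2 * σ2 * (∫ a, a ⬝ᵥ a ∂νx)) (Measure.map (θ m) P) := by
      exact (hD1.const_mul (1 - γ * μ / (1 + γ * M))).add
        (integrable_const (γ ^ 2 * σ2 * (∫ a, a ⬝ᵥ a ∂νx)))
    have hmono := integral_mono hIL hIR (fun δ => lemA δ)
    have heq3 : ∫ δ, ((1 - γ * μ / (1 + γ * M)) * (∑ i, (δ i - θstar i) ^ 2)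
          + γ ^ 2 * σ2 * (∫ a, a ⬝ᵥ a ∂νx)) ∂(Measure.map (θ m) P)
        = (1 - γ * μ / (1 + γ * M)) * (∫ ω, ∑ i, (θ m ω i - θstar i) ^ 2 ∂P)
          + γ ^ 2 * σ2 * (∫ a, a ⬝ᵥ a ∂νx) := by
      rw [integral_add (hD1.const_mul _) (integrable_const _), integral_const_mul,
        integral_const, integral_map (hθmeas m).aemeasurable hNmeas.aestronglyMeasurable]
      simp [measure_univ]
    linarith [hmono, heq3.le, heq3.ge]
  -- iterate the one-step inequality
  have key : ∀ n : ℕ, Integrable (fun ω => ∑ i, (θ n ω i - θstar i) ^ 2) P ∧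
      ∫ ω, ∑ i, (θ n ω i - θstar i) ^ 2 ∂P
        ≤ (1 - γ * μ / (1 + γ * M)) ^ n * (∫ ω, ∑ i, (θ 0 ω i - θstar i) ^ 2 ∂P)
          + (γ ^ 2 * σ2 * (∫ a, a ⬝ᵥ a ∂νx))
              * ∑ k ∈ Finset.range n, (1 - γ * μ / (1 + γ * M)) ^ k := by
    intro n
    induction n with
    | zero => exact ⟨hθ0L2, by simp⟩
    | succ n ihn =>
      obtain ⟨ihi, ihb⟩ := ihn
      obtain ⟨hi1, hb1⟩ := hstep n ihi
      refine ⟨hi1, ?_⟩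
      calc ∫ ω, ∑ i, (θ (n + 1) ω i - θstar i) ^ 2 ∂P
          ≤ (1 - γ * μ / (1 + γ * M)) * ∫ ω, ∑ i, (θ n ω i - θstar i) ^ 2 ∂P
            + γ ^ 2 * σ2 * (∫ a, a ⬝ᵥ a ∂νx) := hb1
        _ ≤ (1 - γ * μ / (1 + γ * M)) *
              ((1 - γ * μ / (1 + γ * M)) ^ n * (∫ ω, ∑ i, (θ 0 ω i - θstar i) ^ 2 ∂P)
                + (γ ^ 2 * σ2 * (∫ a, a ⬝ᵥ a ∂νx))
                    * ∑ k ∈ Finset.range n, (1 - γ * μ / (1 + γ * M)) ^ k)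
            + γ ^ 2 * σ2 * (∫ a, a ⬝ᵥ a ∂νx) :=
          add_le_add (mul_le_mul_of_nonneg_left ihb hρ0) le_rfl
        _ = (1 - γ * μ / (1 + γ * M)) ^ (n + 1)
              * (∫ ω, ∑ i, (θ 0 ω i - θstar i) ^ 2 ∂P)
            + (γ ^ 2 * σ2 * (∫ a, a ⬝ᵥ a ∂νx))
                * ∑ k ∈ Finset.range (n + 1), (1 - γ * μ / (1 + γ * M)) ^ k := by
          rw [geom_sum_succ]
          ring
  -- conclude
  intro n
  obtain ⟨-, hb⟩ := key n
  refine hb.trans (add_le_add le_rfl ?_)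
  have hIx0 : 0 ≤ ∫ a, a ⬝ᵥ a ∂νx := integral_nonneg hK0
  have hb0 : 0 ≤ γ ^ 2 * σ2 * (∫ a, a ⬝ᵥ a ∂νx) :=
    mul_nonneg (mul_nonneg (by positivity) hσ2) hIx0
  have ht0 : γ * μ / (1 + γ * M) ≠ 0 := ne_of_gt hfrac_pos
  have hsum : ∑ k ∈ Finset.range n, (1 - γ * μ / (1 + γ * M)) ^ k
      ≤ (1 + γ * M) / (γ * μ) := by
    have hne : (1 - γ * μ / (1 + γ * M)) ≠ 1 := by
      intro h; nlinarith [hfrac_pos]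
    have hpow : 0 ≤ (1 - γ * μ / (1 + γ * M)) ^ n := pow_nonneg hρ0 n
    calc ∑ k ∈ Finset.range n, (1 - γ * μ / (1 + γ * M)) ^ k
        = ((1 - γ * μ / (1 + γ * M)) ^ n - 1) / ((1 - γ * μ / (1 + γ * M)) - 1) :=
          geom_sum_eq hne n
      _ = (1 - (1 - γ * μ / (1 + γ * M)) ^ n) / (γ * μ / (1 + γ * M)) := by
          rw [show (1 - γ * μ / (1 + γ * M)) - 1 = -(γ * μ / (1 + γ * M)) by ring,
            div_neg, ← neg_div, neg_sub]
      _ ≤ 1 / (γ * μ / (1 + γ * M)) := by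
          gcongr
          linarith
      _ = (1 + γ * M) / (γ * μ) := one_div_div _ _
  have hfin : γ ^ 2 * σ2 * (∫ a, a ⬝ᵥ a ∂νx) * ((1 + γ * M) / (γ * μ))
      = γ * (1 + γ * M) * σ2 * (∫ a, a ⬝ᵥ a ∂νx) / μ := by
    field_simp
  calc (γ ^ 2 * σ2 * (∫ a, a ⬝ᵥ a ∂νx))
        * ∑ k ∈ Finset.range n, (1 - γ * μ / (1 + γ * M)) ^ k
      ≤ (γ ^ 2 * σ2 * (∫ a, a ⬝ᵥ a ∂νx)) * ((1 + γ * M) / (γ * μ)) :=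
        mul_le_mul_of_nonneg_left hsum hb0
    _ = γ * (1 + γ * M) * σ2 * (∫ a, a ⬝ᵥ a ∂νx) / μ := hfin
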